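/- A connected directed graph admits a dual nowhere-zero p-flow (a map from arcs to Z_p \ {0} whose signed sum around every circuit is zero) if and only if the underlying undirected graph is p-colorable (there is a proper vertex coloring with p colors). -/

import Mathlib

/-- A dual `p`-flow on a digraph given by `tl, hd : E → V`: a map `φ : E → ZMod p`
whose signed sum along every closed walk (hence every circuit) vanishes. -/
def IsDualFlow {V E : Type} (p : ℕ) (tl hd : E → V) (φ : E → ZMod p) : Prop :=
  ∀ (n : ℕ) (v : Fin (n + 1) → V) (e : Fin n → E) (σ : Fin n → Bool),
    v 0 = v (Fin.last n) →
    (∀ i : Fin n,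
      (σ i = true → tl (e i) = v i.castSucc ∧ hd (e i) = v i.succ) ∧
      (σ i = false → hd (e i) = v i.castSucc ∧ tl (e i) = v i.succ)) →
    (∑ i : Fin n, if σ i then φ (e i) else -φ (e i)) = 0

/-- The underlying undirected graph of the digraph is connected. -/
def DigraphConnected {V E : Type} (tl hd : E → V) : Prop :=
  ∀ u w : V, Relation.ReflTransGen
    (fun a b => ∃ e : E, (tl e = a ∧ hd e = b) ∨ (tl e = b ∧ hd e = a)) u w

/-- Telescoping sum in an additive commutative group. -/
lemma dfc_telescope {M : Type*} [AddCommGroup M] (n : ℕ) (g : Fin (n + 1) → M) :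
    (∑ i : Fin n, (g i.succ - g i.castSucc)) = g (Fin.last n) - g 0 := by
  induction n with
  | zero => simp
  | succ n ih =>
    rw [Fin.sum_univ_castSucc]
    have h1 : ∀ i : Fin n, g i.castSucc.succ - g i.castSucc.castSucc
        = (g ∘ Fin.castSucc) i.succ - (g ∘ Fin.castSucc) i.castSucc := by
      intro i
      simp only [Function.comp_apply, Fin.succ_castSucc]
    rw [Finset.sum_congr rfl (fun i _ => h1 i), ih]
    simp only [Function.comp, Fin.succ_last, Fin.castSucc_zero]
    abel

/-- Labeled step relation: move along an edge forward or backward, updating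
the potential by `±φ e`. -/
def DFStep {V E : Type} (p : ℕ) (tl hd : E → V) (φ : E → ZMod p) :
    V × ZMod p → V × ZMod p → Prop :=
  fun a b => ∃ es : E × Bool,
    (es.2 = true ∧ tl es.1 = a.1 ∧ hd es.1 = b.1 ∧ b.2 = a.2 + φ es.1) ∨
    (es.2 = false ∧ hd es.1 = a.1 ∧ tl es.1 = b.1 ∧ b.2 = a.2 - φ es.1)

lemma dfc_step_symm {V E : Type} {p : ℕ} {tl hd : E → V} {φ : E → ZMod p}
    {a b : V × ZMod p} (h : DFStep p tl hd φ a b) : DFStep p tl hd φ b a := by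
  obtain ⟨⟨e, s⟩, h | h⟩ := h
  · exact ⟨⟨e, false⟩, Or.inr ⟨rfl, h.2.2.1, h.2.1, by rw [h.2.2.2]; ring⟩⟩
  · exact ⟨⟨e, true⟩, Or.inl ⟨rfl, h.2.2.1, h.2.1, by rw [h.2.2.2]; ring⟩⟩

lemma dfc_finchain {V E : Type} {p : ℕ} {tl hd : E → V} {φ : E → ZMod p}
    {s t : V × ZMod p} (h : Relation.ReflTransGen (DFStep p tl hd φ) s t) :
    ∃ (n : ℕ) (c : Fin (n + 1) → V × ZMod p), c 0 = s ∧ c (Fin.last n) = t ∧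
      ∀ i : Fin n, DFStep p tl hd φ (c i.castSucc) (c i.succ) := by
  induction h with
  | refl => exact ⟨0, fun _ => s, rfl, rfl, fun i => i.elim0⟩
  | @tail b c hab hbc ih =>
    obtain ⟨n, ch, h0, hl, hs⟩ := ih
    refine ⟨n + 1, Fin.snoc ch c, ?_, ?_, ?_⟩
    · rw [show (0 : Fin (n + 1 + 1)) = Fin.castSucc 0 from (Fin.castSucc_zero).symm,
        Fin.snoc_castSucc]
      exact h0
    · rw [Fin.snoc_last]
    · intro i
      induction i using Fin.lastCases with
      | last =>
        rw [Fin.succ_last, Fin.snoc_last, Fin.snoc_castSucc, hl]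
        exact hbc
      | cast j =>
        rw [Fin.succ_castSucc, Fin.snoc_castSucc, Fin.snoc_castSucc]
        exact hs j

lemma dfc_closed {V E : Type} {p : ℕ} {tl hd : E → V} {φ : E → ZMod p}
    (hφ : IsDualFlow p tl hd φ) {a b : V} {x y : ZMod p}
    (h : Relation.ReflTransGen (DFStep p tl hd φ) (a, x) (b, y)) (hab : a = b) :
    x = y := by
  obtain ⟨n, c, h0, hl, hs⟩ := dfc_finchain h
  choose es hes using hs
  have key := hφ n (fun i => (c i).1) (fun i => (es i).1) (fun i => (es i).2) ?_ ?_
  · have hterm : ∀ i : Fin n,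
        (if (es i).2 then φ (es i).1 else -φ (es i).1)
          = (fun j => (c j).2) i.succ - (fun j => (c j).2) i.castSucc := by
      intro i
      rcases hes i with ⟨hσ, _, _, hval⟩ | ⟨hσ, _, _, hval⟩
      · simp only [hσ, if_true, hval]; ring
      · simp only [hσ, Bool.false_eq_true, if_false, hval]; ring
    rw [Finset.sum_congr rfl (fun i _ => hterm i),
      dfc_telescope n (fun j => (c j).2)] at key
    rw [h0, hl] at key
    exact (sub_eq_zero.mp key).symm
  · show (c 0).1 = (c (Fin.last n)).1
    rw [h0, hl]; exact hab
  · intro i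
    constructor
    · intro ht
      rcases hes i with ⟨_, h1, h2, _⟩ | ⟨hσ, _, _, _⟩
      · exact ⟨h1, h2⟩
      · exact absurd ht (by simp [hσ])
    · intro ht
      rcases hes i with ⟨hσ, _, _, _⟩ | ⟨_, h1, h2, _⟩
      · exact absurd ht (by simp [hσ])
      · exact ⟨h1, h2⟩

lemma dfc_lift {V E : Type} {p : ℕ} {tl hd : E → V} {φ : E → ZMod p} {u w : V}
    (h : Relation.ReflTransGen
      (fun a b => ∃ e : E, (tl e = a ∧ hd e = b) ∨ (tl e = b ∧ hd e = a)) u w)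
    (x : ZMod p) :
    ∃ y, Relation.ReflTransGen (DFStep p tl hd φ) (u, x) (w, y) := by
  induction h with
  | refl => exact ⟨x, Relation.ReflTransGen.refl⟩
  | @tail b c hab hbc ih =>
    obtain ⟨y, hy⟩ := ih
    obtain ⟨e, ⟨h1, h2⟩ | ⟨h1, h2⟩⟩ := hbc
    · exact ⟨y + φ e, hy.tail ⟨⟨e, true⟩, Or.inl ⟨rfl, h1, h2, rfl⟩⟩⟩
    · exact ⟨y - φ e, hy.tail ⟨⟨e, false⟩, Or.inr ⟨rfl, h2, h1, rfl⟩⟩⟩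

theorem dually_flowing_iff_colorable {V E : Type} [Fintype V] [Fintype E]
    (p : ℕ) (hp : 2 ≤ p) (tl hd : E → V) (hconn : DigraphConnected tl hd) :
    (∃ φ : E → ZMod p, (∀ e, φ e ≠ 0) ∧ IsDualFlow p tl hd φ) ↔
    (∃ ω : V → ZMod p, ∀ e : E, ω (tl e) ≠ ω (hd e)) := by
  constructor
  · rintro ⟨φ, hφ0, hφ⟩
    by_cases hV : Nonempty V
    · obtain ⟨v₀⟩ := hV
      have lift : ∀ w : V, ∃ y,
          Relation.ReflTransGen (DFStep p tl hd φ) (v₀, 0) (w, y) :=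
        fun w => dfc_lift (hconn v₀ w) 0
      set ω : V → ZMod p := fun w => Classical.choose (lift w) with hωdef
      have hω : ∀ w, Relation.ReflTransGen (DFStep p tl hd φ) (v₀, 0) (w, ω w) :=
        fun w => Classical.choose_spec (lift w)
      have uniq : ∀ (b : V) (y y' : ZMod p),
          Relation.ReflTransGen (DFStep p tl hd φ) (v₀, 0) (b, y) →
          Relation.ReflTransGen (DFStep p tl hd φ) (v₀, 0) (b, y') → y = y' := by
        intro b y y' h1 h2
        have hsym : Relation.ReflTransGen (DFStep p tl hd φ) (b, y) (v₀, 0) :=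
          haveI : Std.Symm (DFStep p tl hd φ) := ⟨fun _ _ h => dfc_step_symm h⟩
          Std.Symm.symm _ _ h1
        exact dfc_closed hφ (hsym.trans h2) rfl
      refine ⟨ω, fun e => ?_⟩
      have h1 : Relation.ReflTransGen (DFStep p tl hd φ) (v₀, 0)
          (hd e, ω (tl e) + φ e) :=
        (hω (tl e)).tail ⟨⟨e, true⟩, Or.inl ⟨rfl, rfl, rfl, rfl⟩⟩
      have heq : ω (tl e) + φ e = ω (hd e) := uniq (hd e) _ _ h1 (hω (hd e))
      intro hc
      apply hφ0 e
      have : ω (tl e) + φ e = ω (tl e) := by rw [heq, ← hc]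
      simpa using this
    · exact ⟨fun v => absurd ⟨v⟩ hV, fun e => absurd ⟨tl e⟩ hV⟩
  · rintro ⟨ω, hω⟩
    refine ⟨fun e => ω (hd e) - ω (tl e),
      fun e => sub_ne_zero.mpr (Ne.symm (hω e)), ?_⟩
    intro n v e σ hv he
    have hterm : ∀ i : Fin n,
        (if σ i then ω (hd (e i)) - ω (tl (e i)) else -(ω (hd (e i)) - ω (tl (e i))))
          = (ω ∘ v) i.succ - (ω ∘ v) i.castSucc := by
      intro i
      cases hσ : σ i with
      | true =>
        obtain ⟨h1, h2⟩ := (he i).1 hσ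
        simp only [if_true, h1, h2, Function.comp]
      | false =>
        obtain ⟨h1, h2⟩ := (he i).2 hσ
        simp only [Bool.false_eq_true, if_false, h1, h2, Function.comp]
        ring
    rw [Finset.sum_congr rfl (fun i _ => hterm i), dfc_telescope]
    simp [Function.comp, ← hv]
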